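/- arXiv:2210.05177 — 3 statements merged into one kernel-verified Lean document; each statement's English description precedes it below -/
import Mathlib

section
/- Let f : ℝ^d → ℝ be L-smooth with ‖∇f(w)‖ ≤ G everywhere, and let (Ω, μ, g) be a stochastic gradient oracle for f with each g(ω,·) L-Lipschitz. Fix ρ > 0 and a point w with ∇f(w) ≠ 0 and g(ω, w) ≠ 0 for μ-a.e. ω. Then the SAM ascent point w_{+} (ω) = w + ρ·g(ω,w)/‖g(ω,w)‖ satisfies E_ω⟨∇f(w), g(ω, w_{+}(ω))⟩ ≥ (1/2)‖∇f(w)‖² − L²ρ² − LρG. -/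
open MeasureTheory RealInnerProductSpace

/-- Lemma 2 (stochastic SAM ascent inner-product lower bound):
for an `L`-smooth `f` with gradients bounded by `G` and a stochastic gradient oracle
`(Ω, μ, g)` (unbiased, variance `≤ σ²`, a.e.-`L`-Lipschitz in the second argument),
any `ρ > 0` and any `w` with `∇f(w) ≠ 0` and `g(ω, w) ≠ 0` a.e., the SAM ascent point
`w₊(ω) = w + ρ·g(ω,w)/‖g(ω,w)‖` satisfies
`E_ω ⟪∇f(w), g(ω, w₊(ω))⟫ ≥ ½‖∇f(w)‖² − L²ρ² − LρG`. -/
theorem sam_stochastic_ascent_inner_lower_bound {d : ℕ} (hd : 1 ≤ d)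
    (f : EuclideanSpace ℝ (Fin d) → ℝ) (L G σ : ℝ) (hL : 0 < L) (hG : 0 ≤ G)
    (hdiff : Differentiable ℝ f)
    (hsmooth : ∀ w v : EuclideanSpace ℝ (Fin d),
      ‖gradient f w - gradient f v‖ ≤ L * ‖w - v‖)
    (hbound : ∀ w : EuclideanSpace ℝ (Fin d), ‖gradient f w‖ ≤ G)
    (Ω : Type*) [MeasurableSpace Ω] (μ : Measure Ω) [IsProbabilityMeasure μ]
    (g : Ω → EuclideanSpace ℝ (Fin d) → EuclideanSpace ℝ (Fin d))
    (hgmeas : Measurable (Function.uncurry g))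
    (hunbiased : ∀ v : EuclideanSpace ℝ (Fin d), ∫ ω, g ω v ∂μ = gradient f v)
    (hvar : ∀ v : EuclideanSpace ℝ (Fin d),
      ∫ ω, ‖g ω v - gradient f v‖ ^ 2 ∂μ ≤ σ ^ 2)
    (hglip : ∀ᵐ ω ∂μ, ∀ u v : EuclideanSpace ℝ (Fin d),
      ‖g ω u - g ω v‖ ≤ L * ‖u - v‖)
    (ρ : ℝ) (hρ : 0 < ρ)
    (w : EuclideanSpace ℝ (Fin d)) (hw : gradient f w ≠ 0)
    (hgw : ∀ᵐ ω ∂μ, g ω w ≠ 0) :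
    (∫ ω, ⟪gradient f w, g ω (w + (ρ / ‖g ω w‖) • g ω w)⟫ ∂μ)
      ≥ (1 / 2) * ‖gradient f w‖ ^ 2 - L ^ 2 * ρ ^ 2 - L * ρ * G := by

  set a := gradient f w with ha
  have hmw : Measurable fun ω => g ω w :=
    hgmeas.comp (measurable_id.prodMk measurable_const)
  have hwpm : Measurable fun ω => w + (ρ / ‖g ω w‖) • g ω w :=
    measurable_const.add ((measurable_const.div hmw.norm).smul hmw)
  have hmw2 : Measurable fun ω => g ω (w + (ρ / ‖g ω w‖) • g ω w) :=
    hgmeas.comp (measurable_id.prodMk hwpm)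
  -- integrability of ω ↦ g ω w
  have hint_gw : Integrable (fun ω => g ω w) μ := by
    by_contra h
    have := hunbiased w
    rw [integral_undef h] at this
    exact hw this.symm
  -- pointwise a.e. bound
  have hkey : ∀ᵐ ω ∂μ,
      ⟪a, g ω (w + (ρ / ‖g ω w‖) • g ω w)⟫ ≥ ⟪a, g ω w⟫ - G * (L * ρ) := by
    filter_upwards [hglip, hgw] with ω hlip hne
    have hnorm : ‖(w + (ρ / ‖g ω w‖) • g ω w) - w‖ = ρ := by
      have hpos : (0:ℝ) < ‖g ω w‖ := norm_pos_iff.mpr hne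
      rw [add_sub_cancel_left, norm_smul]
      rw [Real.norm_eq_abs, abs_div, abs_of_pos hρ, abs_of_pos hpos]
      field_simp
    have h1 : ‖g ω (w + (ρ / ‖g ω w‖) • g ω w) - g ω w‖ ≤ L * ρ := by
      have := hlip (w + (ρ / ‖g ω w‖) • g ω w) w
      rwa [hnorm] at this
    have h2 : |⟪a, g ω (w + (ρ / ‖g ω w‖) • g ω w) - g ω w⟫| ≤ G * (L * ρ) := by
      calc |⟪a, g ω (w + (ρ / ‖g ω w‖) • g ω w) - g ω w⟫|
          ≤ ‖a‖ * ‖g ω (w + (ρ / ‖g ω w‖) • g ω w) - g ω w‖ := abs_real_inner_le_norm _ _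
        _ ≤ G * (L * ρ) := by
            apply mul_le_mul (hbound w) h1 (norm_nonneg _) hG
    have h3 : ⟪a, g ω (w + (ρ / ‖g ω w‖) • g ω w) - g ω w⟫ ≥ -(G * (L * ρ)) :=
      neg_le_of_abs_le h2
    have h4 : ⟪a, g ω (w + (ρ / ‖g ω w‖) • g ω w) - g ω w⟫
        = ⟪a, g ω (w + (ρ / ‖g ω w‖) • g ω w)⟫ - ⟪a, g ω w⟫ := inner_sub_right _ _ _
    linarith [h3, h4.symm.le, h4.le]
  -- integrability of the main integrand
  have hint1 : Integrable (fun ω => ⟪a, g ω w⟫) μ := hint_gw.const_inner a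
  have hint2 : Integrable (fun ω => ⟪a, g ω (w + (ρ / ‖g ω w‖) • g ω w) - g ω w⟫) μ := by
    apply (integrable_const (G * (L * ρ))).mono'
    · exact (measurable_const.inner (hmw2.sub hmw)).aestronglyMeasurable
    · filter_upwards [hglip, hgw] with ω hlip hne
      have hnorm : ‖(w + (ρ / ‖g ω w‖) • g ω w) - w‖ = ρ := by
        have hpos : (0:ℝ) < ‖g ω w‖ := norm_pos_iff.mpr hne
        rw [add_sub_cancel_left, norm_smul]
        rw [Real.norm_eq_abs, abs_div, abs_of_pos hρ, abs_of_pos hpos]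
        field_simp
      have h1 : ‖g ω (w + (ρ / ‖g ω w‖) • g ω w) - g ω w‖ ≤ L * ρ := by
        have := hlip (w + (ρ / ‖g ω w‖) • g ω w) w
        rwa [hnorm] at this
      calc ‖⟪a, g ω (w + (ρ / ‖g ω w‖) • g ω w) - g ω w⟫‖
          ≤ ‖a‖ * ‖g ω (w + (ρ / ‖g ω w‖) • g ω w) - g ω w‖ := norm_inner_le_norm _ _
        _ ≤ G * (L * ρ) := mul_le_mul (hbound w) h1 (norm_nonneg _) hG
  have hint3 : Integrable (fun ω => ⟪a, g ω (w + (ρ / ‖g ω w‖) • g ω w)⟫) μ := by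
    have : (fun ω => ⟪a, g ω (w + (ρ / ‖g ω w‖) • g ω w)⟫)
        = fun ω => ⟪a, g ω w⟫ + ⟪a, g ω (w + (ρ / ‖g ω w‖) • g ω w) - g ω w⟫ := by
      funext ω; rw [inner_sub_right]; ring
    rw [this]; exact hint1.add hint2
  have hle : ∫ ω, ⟪a, g ω (w + (ρ / ‖g ω w‖) • g ω w)⟫ ∂μ
      ≥ ∫ ω, (⟪a, g ω w⟫ - G * (L * ρ)) ∂μ := by
    apply integral_mono_ae (hint1.sub (integrable_const _)) hint3
    filter_upwards [hkey] with ω h using h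
  have heval : ∫ ω, (⟪a, g ω w⟫ - G * (L * ρ)) ∂μ = ‖a‖ ^ 2 - G * (L * ρ) := by
    rw [integral_sub hint1 (integrable_const _), integral_const, probReal_univ,
      one_smul]
    congr 1
    rw [integral_inner hint_gw, hunbiased w, ← ha, real_inner_self_eq_norm_sq]
  rw [heval] at hle
  nlinarith [sq_nonneg ‖a‖, sq_nonneg (L * ρ), hle]
end

section
/- Let f : ℝ^d → ℝ be L-smooth and let h : ℝ^d → ℝ^d be any L-Lipschitz map. Fix w ∈ ℝ^d with h(w) ≠ 0, ρ > 0, η > 0, and set w_{½} = w + ρ·h(w)/‖h(w)‖. Then f(w − η·h(w_{½})) ≤ f(w) − (Lη²/2)‖∇f(w)‖² + Lη²‖∇f(w) − h(w)‖² + η²L³ρ² − (1 − Lη)·η·⟨∇f(w), h(w_{½})⟩. -/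
open RealInnerProductSpace intervalIntegral

lemma descent_lemma {d : ℕ}
    (f : EuclideanSpace ℝ (Fin d) → ℝ) (L : ℝ) (hL : 0 < L)
    (hdiff : Differentiable ℝ f)
    (hsmooth : ∀ w v : EuclideanSpace ℝ (Fin d),
      ‖gradient f w - gradient f v‖ ≤ L * ‖w - v‖)
    (x v : EuclideanSpace ℝ (Fin d)) :
    f (x + v) ≤ f x + ⟪gradient f x, v⟫ + L / 2 * ‖v‖ ^ 2 := by
  have key : ∀ t : ℝ, HasDerivAt (fun t : ℝ => f (x + t • v))
      (⟪gradient f (x + t • v), v⟫) t := by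
    intro t
    have h1 : HasFDerivAt f (InnerProductSpace.toDual ℝ _ (gradient f (x + t • v))) (x + t • v) :=
      hasGradientAt_iff_hasFDerivAt.mp ((hdiff _).hasGradientAt)
    have h2 : HasDerivAt (fun t : ℝ => x + t • v) v t := by
      simpa using ((hasDerivAt_id t).smul_const v).const_add x
    exact h1.comp_hasDerivAt t h2
  have cont : Continuous fun t : ℝ => ⟪gradient f (x + t • v), v⟫ := by
    have lipg : LipschitzWith ⟨L, hL.le⟩ (gradient f) := by
      apply LipschitzWith.of_dist_le_mul
      intro a b
      rw [dist_eq_norm, dist_eq_norm]; exact hsmooth a b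
    exact (lipg.continuous.comp (by continuity)).inner continuous_const
  have heq : (∫ t in (0:ℝ)..1, ⟪gradient f (x + t • v), v⟫) = f (x + v) - f x := by
    have := intervalIntegral.integral_eq_sub_of_hasDerivAt (a := (0:ℝ)) (b := 1)
      (fun t _ => key t) (cont.intervalIntegrable 0 1)
    simpa only [one_smul, zero_smul, add_zero] using this
  have contb : Continuous fun t : ℝ => ⟪gradient f x, v⟫ + t * (L * ‖v‖ ^ 2) := by fun_prop
  have hbound : (∫ t in (0:ℝ)..1, ⟪gradient f (x + t • v), v⟫)
      ≤ ∫ t in (0:ℝ)..1, (⟪gradient f x, v⟫ + t * (L * ‖v‖ ^ 2)) := by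
    apply intervalIntegral.integral_mono_on zero_le_one (cont.intervalIntegrable 0 1)
      (contb.intervalIntegrable 0 1)
    intro t ht
    have h5 : ⟪gradient f (x + t • v) - gradient f x, v⟫
        ≤ ‖gradient f (x + t • v) - gradient f x‖ * ‖v‖ := real_inner_le_norm _ _
    have h3 : ‖gradient f (x + t • v) - gradient f x‖ ≤ L * (t * ‖v‖) := by
      have := hsmooth (x + t • v) x
      simpa [norm_smul, abs_of_nonneg ht.1] using this
    have h4 : ⟪gradient f (x + t • v) - gradient f x, v⟫ ≤ L * (t * ‖v‖) * ‖v‖ :=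
      h5.trans (by nlinarith [norm_nonneg v])
    rw [inner_sub_left] at h4
    nlinarith [sq_nonneg ‖v‖]
  have hval : (∫ t in (0:ℝ)..1, (⟪gradient f x, v⟫ + t * (L * ‖v‖ ^ 2)))
      = ⟪gradient f x, v⟫ + L / 2 * ‖v‖ ^ 2 := by
    rw [intervalIntegral.integral_add intervalIntegrable_const
      (intervalIntegral.intervalIntegrable_id.mul_const _),
      intervalIntegral.integral_mul_const, integral_id]
    simp
    ring
  linarith


/-- Deterministic one-step SAM descent inequality: for `L`-smooth `f`, any `L`-Lipschitz
map `h`, `w` with `h(w) ≠ 0`, `ρ > 0`, `η > 0`, and `w½ = w + ρ·h(w)/‖h(w)‖`, we have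
`f(w − η·h(w½)) ≤ f(w) − (Lη²/2)‖∇f(w)‖² + Lη²‖∇f(w) − h(w)‖² + η²L³ρ²
  − (1 − Lη)·η·⟪∇f(w), h(w½)⟫`. -/
theorem sam_one_step_descent_det {d : ℕ} (hd : 1 ≤ d)
    (f : EuclideanSpace ℝ (Fin d) → ℝ) (L : ℝ) (hL : 0 < L)
    (hdiff : Differentiable ℝ f)
    (hsmooth : ∀ w v : EuclideanSpace ℝ (Fin d),
      ‖gradient f w - gradient f v‖ ≤ L * ‖w - v‖)
    (h : EuclideanSpace ℝ (Fin d) → EuclideanSpace ℝ (Fin d))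
    (hhlip : ∀ w v : EuclideanSpace ℝ (Fin d), ‖h w - h v‖ ≤ L * ‖w - v‖)
    (w : EuclideanSpace ℝ (Fin d)) (hw : h w ≠ 0)
    (ρ η : ℝ) (hρ : 0 < ρ) (hη : 0 < η) :
    f (w - η • h (w + (ρ / ‖h w‖) • h w))
      ≤ f w - (L * η ^ 2 / 2) * ‖gradient f w‖ ^ 2
        + L * η ^ 2 * ‖gradient f w - h w‖ ^ 2 + η ^ 2 * L ^ 3 * ρ ^ 2
        - (1 - L * η) * η * ⟪gradient f w, h (w + (ρ / ‖h w‖) • h w)⟫ := by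
  set g := h (w + (ρ / ‖h w‖) • h w) with hg
  have hnorm : ‖(ρ / ‖h w‖) • h w‖ = ρ := by
    rw [norm_smul, Real.norm_eq_abs, abs_div, abs_of_nonneg hρ.le, abs_norm,
      div_mul_cancel₀ _ (norm_ne_zero_iff.mpr hw)]
  have hdesc := descent_lemma f L hL hdiff hsmooth w (-(η • g))
  have hrw : w + -(η • g) = w - η • g := by abel
  rw [hrw] at hdesc
  have hinner : ⟪gradient f w, -(η • g)⟫ = -(η * ⟪gradient f w, g⟫) := by
    rw [inner_neg_right, real_inner_smul_right]
  have hnn : ‖-(η • g)‖ ^ 2 = η ^ 2 * ‖g‖ ^ 2 := by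
    rw [norm_neg, norm_smul, mul_pow, Real.norm_eq_abs, sq_abs]
  rw [hinner, hnn] at hdesc
  have hC : ‖g - gradient f w‖ ≤ L * ρ + ‖gradient f w - h w‖ := by
    calc ‖g - gradient f w‖ ≤ ‖g - h w‖ + ‖h w - gradient f w‖ :=
          norm_sub_le_norm_sub_add_norm_sub _ _ _
      _ ≤ L * ρ + ‖gradient f w - h w‖ := by
          have h1 : ‖g - h w‖ ≤ L * ρ := by
            have := hhlip (w + (ρ / ‖h w‖) • h w) w
            simpa [add_sub_cancel_left, hnorm] using this
          rw [norm_sub_rev (h w)]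
          exact add_le_add h1 le_rfl
  have hCsq : ‖g - gradient f w‖ ^ 2
      = ‖g‖ ^ 2 - 2 * ⟪gradient f w, g⟫ + ‖gradient f w‖ ^ 2 := by
    rw [norm_sub_sq_real, real_inner_comm]
  have hkey : ‖g‖ ^ 2 - 2 * ⟪gradient f w, g⟫ + ‖gradient f w‖ ^ 2
      ≤ 2 * ‖gradient f w - h w‖ ^ 2 + 2 * L ^ 2 * ρ ^ 2 := by
    rw [← hCsq]
    nlinarith [norm_nonneg (g - gradient f w), norm_nonneg (gradient f w - h w),
      mul_pos hL hρ, sq_nonneg (L * ρ - ‖gradient f w - h w‖)]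
  calc f (w - η • g) ≤ f w + -(η * ⟪gradient f w, g⟫) + L / 2 * (η ^ 2 * ‖g‖ ^ 2) := hdesc
    _ ≤ _ := by nlinarith [mul_pos (mul_pos hL hη) hη, sq_nonneg η, hkey]
end

section
/- Let f : ℝ^d → ℝ be L-smooth with ‖∇f(w)‖ ≤ G everywhere, and let (Ω, μ, g) be a stochastic gradient oracle for f with each g(ω,·) L-Lipschitz. Fix ρ > 0, a mask m ∈ {0,1}^d, and a point w with ∇f(w) ≠ 0 and g(ω, w) ≠ 0 for μ-a.e. ω. Define the sparse ascent point w̃(ω) = w + ρ·(g(ω,w)/‖g(ω,w)‖) ⊙ m and the error e(ω) = ρ·(g(ω,w)/‖g(ω,w)‖) ⊙ (1 − m). Then E_ω⟨∇f(w), g(ω, w̃(ω))⟩ ≥ (1/2)‖∇f(w)‖² − 2L²ρ² − LρG − L²·E_ω‖e(ω)‖². -/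
open MeasureTheory RealInnerProductSpace

/-- Componentwise (Hadamard) product on `EuclideanSpace ℝ (Fin d)`. -/
noncomputable def hadamard {d : ℕ} (x y : EuclideanSpace ℝ (Fin d)) :
    EuclideanSpace ℝ (Fin d) :=
  (EuclideanSpace.equiv (Fin d) ℝ).symm (fun i => x i * y i)

/-- The all-ones vector in `EuclideanSpace ℝ (Fin d)`. -/
noncomputable def onesVec (d : ℕ) : EuclideanSpace ℝ (Fin d) :=
  (EuclideanSpace.equiv (Fin d) ℝ).symm (fun _ => 1)

lemma hadamard_apply {d : ℕ} (x y : EuclideanSpace ℝ (Fin d)) (i : Fin d) :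
    hadamard x y i = x i * y i := rfl

lemma continuous_hadamard_right {d : ℕ} (m : EuclideanSpace ℝ (Fin d)) :
    Continuous fun x : EuclideanSpace ℝ (Fin d) => hadamard x m := by
  have h1 : Continuous fun x : EuclideanSpace ℝ (Fin d) => (fun i => x i * m i : Fin d → ℝ) :=
    continuous_pi fun i =>
      ((continuous_apply i).comp (EuclideanSpace.equiv (Fin d) ℝ).continuous).mul continuous_const
  exact ((EuclideanSpace.equiv (Fin d) ℝ).symm.continuous).comp h1

lemma norm_hadamard_le {d : ℕ} (x m : EuclideanSpace ℝ (Fin d))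
    (hm : ∀ i, m i = 0 ∨ m i = 1) : ‖hadamard x m‖ ≤ ‖x‖ := by
  rw [EuclideanSpace.norm_eq, EuclideanSpace.norm_eq]
  apply Real.sqrt_le_sqrt
  apply Finset.sum_le_sum
  intro i _
  rcases hm i with h | h <;> simp [hadamard_apply, h]
  positivity

/-- Lemma 4 (sparse SAM ascent inner-product lower bound): with a mask `m ∈ {0,1}^d`,
sparse ascent point `w̃(ω) = w + ρ·(g(ω,w)/‖g(ω,w)‖) ⊙ m` and error
`e(ω) = ρ·(g(ω,w)/‖g(ω,w)‖) ⊙ (1 − m)`, we have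
`E_ω ⟪∇f(w), g(ω, w̃(ω))⟫ ≥ ½‖∇f(w)‖² − 2L²ρ² − LρG − L²·E_ω‖e(ω)‖²`. -/
theorem ssam_ascent_inner_lower_bound {d : ℕ} (hd : 1 ≤ d)
    (f : EuclideanSpace ℝ (Fin d) → ℝ) (L G σ : ℝ) (hL : 0 < L) (hG : 0 ≤ G)
    (hdiff : Differentiable ℝ f)
    (hsmooth : ∀ w v : EuclideanSpace ℝ (Fin d),
      ‖gradient f w - gradient f v‖ ≤ L * ‖w - v‖)
    (hbound : ∀ w : EuclideanSpace ℝ (Fin d), ‖gradient f w‖ ≤ G)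
    (Ω : Type*) [MeasurableSpace Ω] (μ : Measure Ω) [IsProbabilityMeasure μ]
    (g : Ω → EuclideanSpace ℝ (Fin d) → EuclideanSpace ℝ (Fin d))
    (hgmeas : Measurable (Function.uncurry g))
    (hunbiased : ∀ v : EuclideanSpace ℝ (Fin d), ∫ ω, g ω v ∂μ = gradient f v)
    (hvar : ∀ v : EuclideanSpace ℝ (Fin d),
      ∫ ω, ‖g ω v - gradient f v‖ ^ 2 ∂μ ≤ σ ^ 2)
    (hglip : ∀ᵐ ω ∂μ, ∀ u v : EuclideanSpace ℝ (Fin d),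
      ‖g ω u - g ω v‖ ≤ L * ‖u - v‖)
    (ρ : ℝ) (hρ : 0 < ρ)
    (m : EuclideanSpace ℝ (Fin d)) (hm : ∀ i, m i = 0 ∨ m i = 1)
    (w : EuclideanSpace ℝ (Fin d)) (hw : gradient f w ≠ 0)
    (hgw : ∀ᵐ ω ∂μ, g ω w ≠ 0) :
    (∫ ω, ⟪gradient f w,
        g ω (w + hadamard ((ρ / ‖g ω w‖) • g ω w) m)⟫ ∂μ)
      ≥ (1 / 2) * ‖gradient f w‖ ^ 2 - 2 * L ^ 2 * ρ ^ 2 - L * ρ * G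
        - L ^ 2 * ∫ ω, ‖hadamard ((ρ / ‖g ω w‖) • g ω w) (onesVec d - m)‖ ^ 2 ∂μ := by
  set a := gradient f w with ha
  set W : Ω → EuclideanSpace ℝ (Fin d) :=
    fun ω => w + hadamard ((ρ / ‖g ω w‖) • g ω w) m with hW
  set c : ℝ := (1 / 2) * ‖a‖ ^ 2 + (1 / 2) * L ^ 2 * ρ ^ 2 with hc
  -- measurability
  have hgwmeas : Measurable fun ω => g ω w :=
    hgmeas.comp (measurable_id.prodMk measurable_const)
  have hnmeas : Measurable fun ω => (ρ / ‖g ω w‖) • g ω w :=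
    ((measurable_const.div hgwmeas.norm)).smul hgwmeas
  have hWmeas : Measurable W :=
    measurable_const.add ((continuous_hadamard_right m).measurable.comp hnmeas)
  have hgWmeas : Measurable fun ω => g ω (W ω) :=
    hgmeas.comp (measurable_id.prodMk hWmeas)
  -- integrability of g · w
  have hint_gw : Integrable (fun ω => g ω w) μ := by
    by_contra h
    have h0 := hunbiased w
    rw [integral_undef h] at h0
    exact hw (by rw [ha, ← h0])
  -- a.e. bound on perturbation
  have hpert : ∀ᵐ ω ∂μ, ‖g ω (W ω) - g ω w‖ ≤ L * ρ := by
    filter_upwards [hglip, hgw] with ω hlip hne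
    have h1 : ‖(ρ / ‖g ω w‖) • g ω w‖ = ρ := by
      rw [norm_smul, Real.norm_eq_abs, abs_div, abs_of_pos hρ, abs_of_nonneg (norm_nonneg _),
        div_mul_cancel₀]
      exact norm_ne_zero_iff.mpr hne
    have h2 : ‖hadamard ((ρ / ‖g ω w‖) • g ω w) m‖ ≤ ρ := by
      exact le_trans (norm_hadamard_le _ _ hm) (le_of_eq h1)
    calc ‖g ω (W ω) - g ω w‖ ≤ L * ‖W ω - w‖ := hlip _ _
      _ = L * ‖hadamard ((ρ / ‖g ω w‖) • g ω w) m‖ := by rw [hW]; ring_nf; rw [add_sub_cancel_left]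
      _ ≤ L * ρ := by exact mul_le_mul_of_nonneg_left h2 hL.le
  -- integrability of g ω (W ω)
  have hint_gW : Integrable (fun ω => g ω (W ω)) μ := by
    have hdiffInt : Integrable (fun ω => g ω (W ω) - g ω w) μ := by
      apply (integrable_const (L * ρ)).mono'
        ((hgWmeas.sub hgwmeas).aestronglyMeasurable)
      filter_upwards [hpert] with ω hω using hω
    have h3 := hdiffInt.add hint_gw
    have h4 : (fun ω => g ω (W ω)) = fun ω => (g ω (W ω) - g ω w) + g ω w := by
      funext ω; simp
    rw [h4]; exact h3
  have hintF : Integrable (fun ω => ⟪a, g ω (W ω)⟫) μ := hint_gW.const_inner a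
  have hintG : Integrable (fun ω => ⟪a, g ω w⟫ - c) μ :=
    (hint_gw.const_inner a).sub (integrable_const c)
  -- a.e. pointwise lower bound
  have hae : ∀ᵐ ω ∂μ, ⟪a, g ω w⟫ - c ≤ ⟪a, g ω (W ω)⟫ := by
    filter_upwards [hpert] with ω hω
    have hsplit : ⟪a, g ω (W ω)⟫ = ⟪a, g ω w⟫ + ⟪a, g ω (W ω) - g ω w⟫ := by
      rw [inner_sub_right]; ring
    have habs := abs_real_inner_le_norm a (g ω (W ω) - g ω w)
    have hn := norm_nonneg (g ω (W ω) - g ω w)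
    have hna := norm_nonneg a
    rw [hsplit, hc]
    have := abs_le.mp habs
    nlinarith [this.1, sq_nonneg (‖a‖ - ‖g ω (W ω) - g ω w‖), mul_pos hL hρ]
  have hmono := integral_mono_ae hintG hintF hae
  have heq : ∫ ω, (⟪a, g ω w⟫ - c) ∂μ = ‖a‖ ^ 2 - c := by
    rw [integral_sub (hint_gw.const_inner a) (integrable_const c), integral_const,
      integral_inner hint_gw, hunbiased w, ← ha, real_inner_self_eq_norm_sq]
    simp
  rw [heq] at hmono
  have hI : 0 ≤ ∫ ω, ‖hadamard ((ρ / ‖g ω w‖) • g ω w) (onesVec d - m)‖ ^ 2 ∂μ :=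
    integral_nonneg fun ω => sq_nonneg _
  have hG2 : 0 ≤ L * ρ * G := by positivity
  rw [ge_iff_le]
  calc (1 / 2) * ‖a‖ ^ 2 - 2 * L ^ 2 * ρ ^ 2 - L * ρ * G
        - L ^ 2 * ∫ ω, ‖hadamard ((ρ / ‖g ω w‖) • g ω w) (onesVec d - m)‖ ^ 2 ∂μ
      ≤ ‖a‖ ^ 2 - c := by rw [hc]; nlinarith [sq_nonneg L, sq_nonneg ρ]
    _ ≤ _ := hmono
end
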